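/- For fixed y ∈ [0,1] and any reference point c ∈ (0,1) with c > 1−y, and any x ∈ [0,1], one has G₋(x,y) ≥ G₋(c,y) + g₋'(c,y)·(x − c), where g₋'(x,y) = −1 + 2y − (1−2x)√(y(1−y)/(x(1−x))). -/
import Mathlib


noncomputable def gMinus (x y : ℝ) : ℝ := x + (1 - 2*x)*(1 - y) - 2*Real.sqrt (x*(1 - x)*y*(1 - y))
noncomputable def GMinus (x y : ℝ) : ℝ := if x > 1 - y then gMinus x y else 0
noncomputable def gMinus' (x y : ℝ) : ℝ := -1 + 2*y - (1 - 2*x)*Real.sqrt (y*(1 - y)/(x*(1 - x)))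

lemma tangent_le (y c x : ℝ) (hy : y ∈ Set.Icc (0:ℝ) 1) (hc : c ∈ Set.Ioo (0:ℝ) 1)
    (hx : x ∈ Set.Icc (0:ℝ) 1) :
    gMinus c y + gMinus' c y * (x - c) ≤ gMinus x y := by
  obtain ⟨hy0, hy1⟩ := hy
  obtain ⟨hc0, hc1⟩ := hc
  obtain ⟨hx0, hx1⟩ := hx
  set s := Real.sqrt (y*(1-y)) with hs_def
  set t := Real.sqrt (c*(1-c)) with ht_def
  set u := Real.sqrt (x*(1-x)) with hu_def
  have hs : 0 ≤ s := Real.sqrt_nonneg _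
  have hu : 0 ≤ u := Real.sqrt_nonneg _
  have ht : 0 < t := Real.sqrt_pos.mpr (by nlinarith)
  have ht2 : t^2 = c*(1-c) := Real.sq_sqrt (by nlinarith)
  have hu2 : u^2 = x*(1-x) := Real.sq_sqrt (by nlinarith)
  have hsplit1 : Real.sqrt (c*(1-c)*y*(1-y)) = t * s := by
    rw [ht_def, hs_def, ← Real.sqrt_mul (by nlinarith)]; ring_nf
  have hsplit2 : Real.sqrt (x*(1-x)*y*(1-y)) = u * s := by
    rw [hu_def, hs_def, ← Real.sqrt_mul (by nlinarith)]; ring_nf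
  have hq : Real.sqrt (y*(1-y)/(c*(1-c))) = s / t := by
    rw [hs_def, ht_def, Real.sqrt_div (by nlinarith)]
  have hqt : s / t * t = s := div_mul_cancel₀ _ (ne_of_gt ht)
  have key : 2*u*t ≤ x + c - 2*x*c := by
    nlinarith [sq_nonneg (x*(1-c) - c*(1-x)), mul_nonneg hu ht.le, sq_nonneg (u*t)]
  rw [gMinus, gMinus, gMinus', hsplit1, hsplit2, hq]
  set q := s / t with hq_def
  have hqt : q * t = s := div_mul_cancel₀ _ (ne_of_gt ht)
  rw [← sub_nonneg]
  have h : (x + (1 - 2*x)*(1 - y) - 2*(u*s) - (c + (1 - 2*c)*(1 - y) - 2*(t*s) + (-1 + 2*y - (1 - 2*c)*q) * (x - c))) * t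
      = s * ((x + c - 2*x*c) - 2*u*t) := by
    linear_combination (2*s)*ht2 + ((1-2*c)*(x-c))*hqt
  nlinarith [h, mul_nonneg hs (by linarith : (0:ℝ) ≤ x + c - 2*x*c - 2*u*t), ht]

lemma slope_nonneg (y c : ℝ) (hy : y ∈ Set.Icc (0:ℝ) 1) (hc : c ∈ Set.Ioo (0:ℝ) 1)
    (hcy : 1 - y < c) : 0 ≤ gMinus' c y := by
  obtain ⟨hy0, hy1⟩ := hy
  obtain ⟨hc0, hc1⟩ := hc
  set s := Real.sqrt (y*(1-y)) with hs_def
  set t := Real.sqrt (c*(1-c)) with ht_def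
  have hs : 0 ≤ s := Real.sqrt_nonneg _
  have ht : 0 < t := Real.sqrt_pos.mpr (by nlinarith)
  have ht2 : t^2 = c*(1-c) := Real.sq_sqrt (by nlinarith)
  have hs2 : s^2 = y*(1-y) := Real.sq_sqrt (by nlinarith)
  have hq : Real.sqrt (y*(1-y)/(c*(1-c))) = s / t := by
    rw [hs_def, ht_def, Real.sqrt_div (by nlinarith)]
  rw [gMinus', hq]
  set q := s / t with hq_def
  have hqt : q * t = s := div_mul_cancel₀ _ (ne_of_gt ht)
  have hq0 : 0 ≤ q := div_nonneg hs ht.le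
  -- suffices to show (2*y-1)*t ≥ (1-2*c)*s
  have main : (1 - 2*c)*s ≤ (2*y - 1)*t := by
    rcases le_or_gt c (1/2) with h2 | h2
    · -- c ≤ 1/2 ⇒ y > 1 - c ≥ 1/2, and c ≤ y; both sides nonneg, compare squares
      have hyc : c ≤ y := by linarith
      have hA : ((1 - 2*c)*s)^2 ≤ ((2*y - 1)*t)^2 := by
        have : (2*y-1)^2*(c*(1-c)) - (1-2*c)^2*(y*(1-y)) = (y - c)*(c + y - 1) := by ring
        nlinarith [mul_nonneg (sub_nonneg.mpr hyc) (by linarith : (0:ℝ) ≤ c + y - 1)]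
      have hL : 0 ≤ (2*y - 1)*t := mul_nonneg (by linarith) ht.le
      nlinarith [hA, hL]
    · rcases le_or_gt y (1/2) with h3 | h3
      · -- c > 1/2, y ≤ 1/2: both sides nonpositive, compare squares
        have hyc : y ≤ c := by linarith
        have hA : ((2*y - 1)*t)^2 ≤ ((1 - 2*c)*s)^2 := by
          have : (1-2*c)^2*(y*(1-y)) - (2*y-1)^2*(c*(1-c)) = (c - y)*(c + y - 1) := by ring
          nlinarith [mul_nonneg (sub_nonneg.mpr hyc) (by linarith : (0:ℝ) ≤ c + y - 1)]
        have hL : (1 - 2*c)*s ≤ 0 := mul_nonpos_of_nonpos_of_nonneg (by linarith) hs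
        have hR : (2*y - 1)*t ≤ 0 := mul_nonpos_of_nonpos_of_nonneg (by linarith) ht.le
        nlinarith [hA, hL, hR]
      · -- c > 1/2, y > 1/2: LHS ≤ 0 ≤ RHS
        have : (1 - 2*c)*s ≤ 0 := mul_nonpos_of_nonpos_of_nonneg (by linarith) hs
        have : 0 ≤ (2*y - 1)*t := mul_nonneg (by linarith) ht.le
        linarith
  -- conclude: -1 + 2*y - (1-2*c)*q ≥ 0, multiply by t
  nlinarith [main, hqt, ht, mul_pos ht ht]

lemma gMinus_boundary (y : ℝ) (hy0 : 0 ≤ y) (hy1 : y ≤ 1) : gMinus (1 - y) y = 0 := by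
  rw [gMinus]
  have h : (1-y)*(1-(1-y))*y*(1-y) = (y*(1-y))^2 := by ring
  rw [h, Real.sqrt_sq (by nlinarith)]
  ring

/-- Linearized lower Cauchy–Schwarz constraint: tangent line at `c` minorizes `G₋`. -/
theorem stmt4 (y c x : ℝ) (hy : y ∈ Set.Icc (0:ℝ) 1) (hc : c ∈ Set.Ioo (0:ℝ) 1)
    (hcy : 1 - y < c) (hx : x ∈ Set.Icc (0:ℝ) 1) :
    GMinus c y + gMinus' c y * (x - c) ≤ GMinus x y := by
  obtain ⟨hy0, hy1⟩ := hy
  have hGc : GMinus c y = gMinus c y := if_pos hcy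
  rw [hGc]
  by_cases hxy : x > 1 - y
  · rw [GMinus, if_pos hxy]
    exact tangent_le y c x ⟨hy0, hy1⟩ hc ⟨hx.1, hx.2⟩
  · rw [GMinus, if_neg hxy]
    push_neg at hxy
    have h1 : gMinus c y + gMinus' c y * ((1 - y) - c) ≤ gMinus (1 - y) y :=
      tangent_le y c (1 - y) ⟨hy0, hy1⟩ hc ⟨by linarith, by linarith⟩
    rw [gMinus_boundary y hy0 hy1] at h1
    have h2 : 0 ≤ gMinus' c y := slope_nonneg y c ⟨hy0, hy1⟩ hc hcy
    nlinarith [mul_nonneg h2 (by linarith : (0:ℝ) ≤ (1 - y) - x)]
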